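/- Let m, n be positive integers and let φ : M_{mn}(ℂ) → M_{mn}(ℂ) be a linear RT-symmetric map, i.e. tr(φ(A)·B) = tr(φ(B)·A) for all A, B ∈ M_{mn}(ℂ). Then det(exp(φ(A ⊕ B))) = det(exp(A ⊕ B)) for all A ∈ M_m(ℂ) and B ∈ M_n(ℂ) if and only if tr₁(φ(I_{mn})) = m·I_n and tr₂(φ(I_{mn})) = n·I_m. -/

import Mathlib

open Matrix Kronecker BigOperators

/-- The Kronecker sum `A ⊕ B = A ⊗ Iₙ + Iₘ ⊗ B`. -/
def kronSum {F : Type*} [CommRing F] {m n : ℕ}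
    (A : Matrix (Fin m) (Fin m) F) (B : Matrix (Fin n) (Fin n) F) :
    Matrix (Fin m × Fin n) (Fin m × Fin n) F :=
  A ⊗ₖ (1 : Matrix (Fin n) (Fin n) F) + (1 : Matrix (Fin m) (Fin m) F) ⊗ₖ B

/-- The first partial trace `tr₁(P) = Σⱼ Pⱼⱼ` (sum of the diagonal blocks). -/
def ptrace1 {F : Type*} [AddCommMonoid F] {m n : ℕ}
    (P : Matrix (Fin m × Fin n) (Fin m × Fin n) F) :
    Matrix (Fin n) (Fin n) F :=
  Matrix.of fun a b => ∑ k : Fin m, P (k, a) (k, b)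

/-- The second partial trace `tr₂(P) = Σ_{k,l} tr(P_{kl}) E_{kl}` (blockwise trace). -/
def ptrace2 {F : Type*} [AddCommMonoid F] {m n : ℕ}
    (P : Matrix (Fin m × Fin n) (Fin m × Fin n) F) :
    Matrix (Fin m) (Fin m) F :=
  Matrix.of fun k l => ∑ a : Fin n, P (k, a) (l, a)

section Aux

open Finset NormedSpace

/-- `det (exp A) = exp (trace A)` for complex matrices. -/
theorem my_det_exp {ι : Type*} [Fintype ι] [DecidableEq ι] (A : Matrix ι ι ℂ) :
    (NormedSpace.exp A).det = Complex.exp A.trace := by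
  letI : SeminormedRing (Matrix ι ι ℂ) := Matrix.linftyOpSemiNormedRing
  letI : NormedRing (Matrix ι ι ℂ) := Matrix.linftyOpNormedRing
  letI : NormedAlgebra ℂ (Matrix ι ι ℂ) := Matrix.linftyOpNormedAlgebra
  haveI : CompleteSpace (Matrix ι ι ℂ) := FiniteDimensional.complete ℂ _
  -- entry continuous linear maps
  have entry_le : ∀ (i j : ι) (M : Matrix ι ι ℂ), ‖M i j‖ ≤ 1 * ‖M‖ := by
    intro i j M
    rw [one_mul, Matrix.linfty_opNorm_def]
    calc ‖M i j‖ ≤ ∑ j', ‖M i j'‖ :=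
          Finset.single_le_sum (f := fun j' => ‖M i j'‖) (fun _ _ => norm_nonneg _) (mem_univ j)
      _ ≤ _ := by
          have h := Finset.le_sup (s := univ) (f := fun i => ∑ j', ‖M i j'‖₊) (mem_univ i)
          have h2 : ((∑ j', ‖M i j'‖₊ : NNReal) : ℝ) ≤ _ := NNReal.coe_le_coe.mpr h
          simpa [NNReal.coe_sum] using h2
  set E : ι → ι → Matrix ι ι ℂ →L[ℂ] ℂ := fun i j =>
    LinearMap.mkContinuous
      { toFun := fun M => M i j, map_add' := fun _ _ => rfl, map_smul' := fun _ _ => rfl }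
      1 (fun M => entry_le i j M) with hE_def
  have hEapp : ∀ i j M, E i j M = M i j := fun _ _ _ => rfl
  -- derivative of entries at 0
  have hent : ∀ i j : ι, HasDerivAt (fun u : ℂ => exp (u • A) i j) (A i j) 0 := by
    intro i j
    have h := hasDerivAt_exp_smul_const (𝕂 := ℂ) A (0 : ℂ)
    have h2 := (E i j).hasFDerivAt.comp_hasDerivAt (0 : ℂ) h
    simp [zero_smul, exp_zero, Function.comp_def] at h2; exact h2
  set g : ℂ → ℂ := fun u => (exp (u • A)).det with hg_def
  -- derivative of g at 0 is trace A
  have hg0 : HasDerivAt g A.trace 0 := by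
    have hprod : ∀ p : Equiv.Perm ι, HasDerivAt
        (fun u : ℂ => ∏ i, exp (u • A) (p i) i)
        (∑ i, (∏ j ∈ univ.erase i, exp ((0:ℂ) • A) (p j) j) • A (p i) i) 0 :=
      fun p => HasDerivAt.fun_finsetProd (fun i _ => hent (p i) i)
    have hsum : HasDerivAt g
        (∑ p : Equiv.Perm ι, (Equiv.Perm.sign p : ℂ) *
          (∑ i, (∏ j ∈ univ.erase i, exp ((0:ℂ) • A) (p j) j) • A (p i) i)) 0 := by
      have : HasDerivAt (fun u : ℂ => ∑ p : Equiv.Perm ι,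
          (Equiv.Perm.sign p : ℂ) * ∏ i, exp (u • A) (p i) i)
          (∑ p : Equiv.Perm ι, (Equiv.Perm.sign p : ℂ) *
            (∑ i, (∏ j ∈ univ.erase i, exp ((0:ℂ) • A) (p j) j) • A (p i) i)) 0 :=
        HasDerivAt.fun_sum (fun p _ => (hprod p).const_mul _)
      convert this using 2 with u
      rw [hg_def]
      exact Matrix.det_apply' _
    convert hsum using 1
    rw [eq_comm]
    rw [Finset.sum_eq_single (1 : Equiv.Perm ι)]
    · simp [Matrix.trace, Matrix.one_apply, zero_smul, exp_zero]
    · intro p _ hp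
      have hinner : ∀ i : ι, (∏ j ∈ univ.erase i, exp ((0:ℂ) • A) (p j) j) • A (p i) i = 0 := by
        intro i
        obtain ⟨k, hki, hk⟩ : ∃ k, k ≠ i ∧ p k ≠ k := by
          by_contra hcon
          push_neg at hcon
          have hpi : p i = i := by
            by_contra hpi
            have h1 : p (p i) = p i := hcon (p i) hpi
            exact hpi (p.injective h1)
          apply hp
          ext j
          by_cases hj : j = i
          · subst hj; simpa using hpi
          · simpa using hcon j hj
        have : (∏ j ∈ univ.erase i, exp ((0:ℂ) • A) (p j) j) = 0 := by
          apply Finset.prod_eq_zero (Finset.mem_erase.mpr ⟨hki, mem_univ k⟩)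
          simp [zero_smul, exp_zero, Matrix.one_apply_ne hk]
        rw [this, zero_smul]
      have hinner' : ∀ i : ι, (∏ j ∈ univ.erase i, (1 : Matrix ι ι ℂ) (p j) j) * A (p i) i = 0 := by
        intro i
        have := hinner i
        simpa [zero_smul, exp_zero, smul_eq_mul] using this
      simp [hinner']
    · simp
  -- multiplicativity
  have gmul : ∀ s t : ℂ, g (s + t) = g s * g t := by
    intro s t
    rw [hg_def]
    simp only [add_smul]
    rw [Matrix.exp_add_of_commute _ _ (((Commute.refl A).smul_left s).smul_right t),
      Matrix.det_mul]
  -- derivative everywhere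
  have hgt : ∀ t : ℂ, HasDerivAt g (g t * A.trace) t := by
    intro t
    have h1 : HasDerivAt (fun s : ℂ => s - t) 1 t := (hasDerivAt_id t).sub_const t
    have hg0' : HasDerivAt g A.trace (t - t) := by rw [sub_self]; exact hg0
    have h2' := HasDerivAt.comp (h₂ := g) (h := fun s : ℂ => s - t) t hg0' h1
    have h2 : HasDerivAt (fun s : ℂ => g (s - t)) (A.trace * 1) t := by
      simpa [Function.comp_def] using h2'
    have h3 : HasDerivAt (fun s : ℂ => g t * g (s - t)) (g t * (A.trace * 1)) t :=
      h2.const_mul _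
    have h4 : (fun s : ℂ => g t * g (s - t)) = g := by
      funext s
      rw [← gmul, add_sub_cancel]
    rw [h4] at h3
    simpa using h3
  -- the auxiliary function is constant
  set F : ℂ → ℂ := fun t => g t * Complex.exp (-(t * A.trace)) with hF_def
  have hF : ∀ t : ℂ, HasDerivAt F 0 t := by
    intro t
    have h1 : HasDerivAt (fun t : ℂ => Complex.exp (-(t * A.trace)))
        (-A.trace * Complex.exp (-(t * A.trace))) t := by
      have h2 : HasDerivAt (fun t : ℂ => -(t * A.trace)) (-A.trace) t := by
        simpa using ((hasDerivAt_id t).mul_const A.trace).fun_neg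
      simpa [mul_comm] using h2.cexp
    have := (hgt t).fun_mul h1
    refine this.congr_deriv ?_
    ring
  have hconst : F 1 = F 0 :=
    is_const_of_deriv_eq_zero (fun t => (hF t).differentiableAt) (fun t => (hF t).deriv) 1 0
  have hF0 : F 0 = 1 := by
    simp [hF_def, hg_def, zero_smul, exp_zero, Matrix.det_one]
  rw [hF0, hF_def] at hconst
  have : g 1 = Complex.exp A.trace := by
    have h5 := congrArg (· * Complex.exp (1 * A.trace)) hconst
    simpa [mul_assoc, ← Complex.exp_add] using h5
  simpa [hg_def, one_smul] using this

lemma trace_mul_kron_right {m n : ℕ} (X : Matrix (Fin m × Fin n) (Fin m × Fin n) ℂ)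
    (A : Matrix (Fin m) (Fin m) ℂ) :
    (X * (A ⊗ₖ (1 : Matrix (Fin n) (Fin n) ℂ))).trace = (ptrace2 X * A).trace := by
  simp only [Matrix.trace, Matrix.diag, Matrix.mul_apply, ptrace2, Matrix.of_apply,
    Matrix.kroneckerMap_apply, Matrix.one_apply, Fintype.sum_prod_type, mul_ite, mul_one, mul_zero,
    Finset.sum_ite_eq', Finset.mem_univ, if_true, Finset.sum_mul]
  exact Finset.sum_congr rfl fun k _ => Finset.sum_comm

lemma trace_mul_kron_left {m n : ℕ} (X : Matrix (Fin m × Fin n) (Fin m × Fin n) ℂ)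
    (B : Matrix (Fin n) (Fin n) ℂ) :
    (X * ((1 : Matrix (Fin m) (Fin m) ℂ) ⊗ₖ B)).trace = (ptrace1 X * B).trace := by
  simp only [Matrix.trace, Matrix.diag, Matrix.mul_apply, ptrace1, Matrix.of_apply,
    Matrix.kroneckerMap_apply, Matrix.one_apply, Fintype.sum_prod_type, ite_mul, one_mul, zero_mul,
    mul_ite, mul_zero, Finset.mem_univ, if_true, Finset.sum_mul]
  have h1 : ∀ (x : Fin m) (x1 : Fin n),
      (∑ x2 : Fin m, ∑ x3 : Fin n, if x2 = x then X (x,x1) (x2,x3) * B x3 x1 else 0)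
        = ∑ x3 : Fin n, X (x,x1) (x,x3) * B x3 x1 := by
    intro x x1
    rw [Finset.sum_comm]
    refine Finset.sum_congr rfl fun x3 _ => ?_
    simp [Finset.sum_ite_eq']
  calc _ = ∑ x : Fin m, ∑ x1 : Fin n, ∑ x3 : Fin n, X (x,x1) (x,x3) * B x3 x1 :=
        Finset.sum_congr rfl fun x _ => Finset.sum_congr rfl fun x1 _ => h1 x x1
    _ = _ := ?_
  rw [Finset.sum_comm]
  exact Finset.sum_congr rfl fun x1 _ => Finset.sum_comm

lemma eq_smul_one_of_trace_mul {ι : Type*} [Fintype ι] [DecidableEq ι]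
    (M : Matrix ι ι ℂ) (c : ℂ) (h : ∀ A : Matrix ι ι ℂ, (M * A).trace = c * A.trace) :
    M = c • (1 : Matrix ι ι ℂ) := by
  ext i j
  have := h (Matrix.single j i 1)
  simp only [Matrix.trace, Matrix.diag, Matrix.mul_apply, Matrix.single, Matrix.of_apply,
    mul_ite, mul_one, mul_zero, ite_and, Finset.sum_ite_eq, Finset.mem_univ, if_true] at this
  simpa [Matrix.one_apply, Matrix.smul_apply] using this

lemma trace_kronSum {m n : ℕ} (A : Matrix (Fin m) (Fin m) ℂ) (B : Matrix (Fin n) (Fin n) ℂ) :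
    (kronSum A B).trace = (n : ℂ) * A.trace + (m : ℂ) * B.trace := by
  simp [kronSum, Matrix.trace_add, Matrix.trace_kronecker, Matrix.trace_one]
  ring

lemma kronSum_smul {m n : ℕ} (t : ℂ) (A : Matrix (Fin m) (Fin m) ℂ)
    (B : Matrix (Fin n) (Fin n) ℂ) :
    kronSum (t • A) (t • B) = t • kronSum A B := by
  simp [kronSum, Matrix.smul_kronecker, Matrix.kronecker_smul, smul_add]

end Aux

/-- Theorem 4.2: an RT-symmetric linear map `φ` on `M_{mn}(ℂ)` (i.e.
`tr(φ(A)B) = tr(φ(B)A)` for all `A, B`) preserves the determinant of `exp` of all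
Kronecker sums iff `tr₁(φ(I)) = m·Iₙ` and `tr₂(φ(I)) = n·Iₘ`. -/
theorem det_exp_kronSum_preserved_iff_of_rt_symmetric
    {m n : ℕ} (hm : 0 < m) (hn : 0 < n)
    (φ : Matrix (Fin m × Fin n) (Fin m × Fin n) ℂ →ₗ[ℂ]
         Matrix (Fin m × Fin n) (Fin m × Fin n) ℂ)
    (hsym : ∀ A B : Matrix (Fin m × Fin n) (Fin m × Fin n) ℂ,
        (φ A * B).trace = (φ B * A).trace) :
    (∀ (A : Matrix (Fin m) (Fin m) ℂ) (B : Matrix (Fin n) (Fin n) ℂ),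
        (NormedSpace.exp (φ (kronSum A B))).det = (NormedSpace.exp (kronSum A B)).det) ↔
      (ptrace1 (φ 1) = (m : ℂ) • (1 : Matrix (Fin n) (Fin n) ℂ) ∧
       ptrace2 (φ 1) = (n : ℂ) • (1 : Matrix (Fin m) (Fin m) ℂ)) := by
  have key : ∀ M : Matrix (Fin m × Fin n) (Fin m × Fin n) ℂ,
      (φ M).trace = (φ 1 * M).trace := by
    intro M
    have := hsym M 1
    simpa using this
  constructor
  · intro h
    -- first, trace preservation on Kronecker sums
    have htr : ∀ (A : Matrix (Fin m) (Fin m) ℂ) (B : Matrix (Fin n) (Fin n) ℂ),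
        (φ (kronSum A B)).trace = (kronSum A B).trace := by
      intro A B
      by_contra hne
      set x := (φ (kronSum A B)).trace with hx
      set y := (kronSum A B).trace with hy
      set t := (x - y)⁻¹ with ht
      have hxy : x - y ≠ 0 := sub_ne_zero.mpr hne
      have h2 := h (t • A) (t • B)
      rw [kronSum_smul, LinearMap.map_smul, my_det_exp, my_det_exp, Matrix.trace_smul,
        Matrix.trace_smul] at h2
      have h3 : Complex.exp (t • x - t • y) = 1 := by
        rw [Complex.exp_sub, h2, div_self (Complex.exp_ne_zero _)]
      have h4 : t • x - t • y = 1 := by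
        rw [smul_eq_mul, smul_eq_mul, ← mul_sub, ht]
        exact inv_mul_cancel₀ hxy
      rw [h4] at h3
      have h5 : Real.exp 1 = 1 := by
        have := Complex.ofReal_exp (1 : ℝ)
        rw [Complex.ofReal_one] at this
        exact_mod_cast this.trans h3
      have h6 := Real.add_one_le_exp (1:ℝ)
      linarith
    constructor
    · -- ptrace1 : use A = 0
      apply eq_smul_one_of_trace_mul
      intro B
      have := htr 0 B
      rw [key] at this
      simp only [kronSum, Matrix.zero_kronecker, zero_add, Matrix.trace_add,
        Matrix.trace_kronecker, Matrix.trace_zero, Matrix.trace_one] at this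
      rw [trace_mul_kron_left] at this
      simpa [Fintype.card_fin] using this
    · -- ptrace2 : use B = 0
      apply eq_smul_one_of_trace_mul
      intro A
      have := htr A 0
      rw [key] at this
      simp only [kronSum, Matrix.kronecker_zero, add_zero, Matrix.trace_add,
        Matrix.trace_kronecker, Matrix.trace_zero, Matrix.trace_one] at this
      rw [trace_mul_kron_right] at this
      simpa [Fintype.card_fin, mul_comm] using this
  · rintro ⟨h1, h2⟩ A B
    have htr : (φ (kronSum A B)).trace = (kronSum A B).trace := by
      have hL : (φ 1 * kronSum A B).trace = (n:ℂ) * A.trace + (m:ℂ) * B.trace := by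
        rw [kronSum, mul_add, Matrix.trace_add, trace_mul_kron_right, trace_mul_kron_left,
          h1, h2]
        simp [Matrix.smul_mul, Matrix.trace_smul, smul_eq_mul]
      rw [key, hL, trace_kronSum]
    rw [my_det_exp, my_det_exp, htr]
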